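/- Let u > 0, u ≠ 1. Define d0 : ℝ^2 → ℝ^8 with rows (−1,0),(0,0),(0,0),(0,0),(−(1+u^2)/(2u),0),(−1/2,−u/2),(u/2,−1),(0,−1), and d1 : ℝ^8 → ℝ by (0,0,0,0,u/2,−1,(−1+u^2)/(2u),1/(2u)). Then d1 ∘ d0 = 0, d0 is injective, and dim(ker d1 / im d0) = 5. -/

import Mathlib

set_option maxHeartbeats 1000000 in
set_option synthInstance.maxHeartbeats 400000 in
theorem stmt9 (u : ℝ) (hu : 0 < u) (hu1 : u ≠ 1) :
    let d0 : (Fin 2 → ℝ) →ₗ[ℝ] (Fin 8 → ℝ) :=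
      Matrix.mulVecLin
        (!![-1,0; 0,0; 0,0; 0,0; -(1+u^2)/(2*u),0; -1/2,-u/2; u/2,-1; 0,-1])
    let d1 : (Fin 8 → ℝ) →ₗ[ℝ] (Fin 1 → ℝ) :=
      Matrix.mulVecLin (!![0,0,0,0,u/2,-1,(-1+u^2)/(2*u),1/(2*u)])
    d1 ∘ₗ d0 = 0 ∧
    Function.Injective d0 ∧
    Module.finrank ℝ
      (↥(LinearMap.ker d1) ⧸
        (LinearMap.range d0).comap (LinearMap.ker d1).subtype) = 5 := by
  intro d0 d1
  have hu0 : u ≠ 0 := ne_of_gt hu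
  have hcomp : d1 ∘ₗ d0 = 0 := by
    apply LinearMap.ext
    intro x
    funext i
    fin_cases i
    simp [d0, d1, Matrix.mulVecLin, Matrix.mulVec, dotProduct, Fin.sum_univ_succ]
    field_simp
    ring
  have hinj : Function.Injective d0 := by
    rw [← LinearMap.ker_eq_bot]
    apply (Submodule.eq_bot_iff _).mpr
    intro x hx
    have e7 : (7 : Fin 8) = (6 : Fin 7).succ := rfl
    have e6 : (6 : Fin 7) = (5 : Fin 6).succ := rfl
    have e5 : (5 : Fin 6) = (4 : Fin 5).succ := rfl
    have h0 := congrFun hx 0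
    have h7 := congrFun hx 7
    simp [d0, Matrix.mulVecLin, Matrix.mulVec, dotProduct, Fin.sum_univ_succ,
      e7, e6, e5, Matrix.cons_val_succ] at h0 h7
    funext i
    fin_cases i
    · simpa using h0
    · simpa using h7
  refine ⟨hcomp, hinj, ?_⟩
  have hsurj : Function.Surjective d1 := by
    intro y
    refine ⟨![0,0,0,0,0,0,0, 2*u*(y 0)], ?_⟩
    funext i
    fin_cases i
    simp [d1, Matrix.mulVecLin, Matrix.mulVec, dotProduct, Fin.sum_univ_succ]
    field_simp
  have hrank1 : Module.finrank ℝ (LinearMap.range d1) = 1 := by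
    rw [LinearMap.range_eq_top.mpr hsurj]
    simp
  have hker7 : Module.finrank ℝ (LinearMap.ker d1) = 7 := by
    have := LinearMap.finrank_range_add_finrank_ker d1
    rw [hrank1] at this
    simp at this
    omega
  have hle : LinearMap.range d0 ≤ LinearMap.ker d1 := by
    rw [LinearMap.range_le_ker_iff]
    exact hcomp
  have hcomap : Module.finrank ℝ ((LinearMap.range d0).comap (LinearMap.ker d1).subtype) = 2 := by
    have e := Submodule.comapSubtypeEquivOfLe hle
    rw [LinearEquiv.finrank_eq e, LinearMap.finrank_range_of_inj hinj]
    simp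
  have := Submodule.finrank_quotient_add_finrank
    ((LinearMap.range d0).comap (LinearMap.ker d1).subtype)
  rw [hcomap, hker7] at this
  omega
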